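/- Let h ⊆ g₂* be an indecomposable Lie subalgebra and let E ⊆ V be an h-invariant isotropic subspace with dim E = 2 such that b₁ × b₂ ≠ 0 for a basis b₁, b₂ of E. Then there exists a one-dimensional h-invariant subspace E₀ ⊆ V not contained in E such that E ⊕ E₀ is an isotropic subspace of V. -/

import Mathlib

noncomputable section

open scoped Matrix

attribute [local instance 100] LieRing.ofAssociativeRing

abbrev V7 : Type := Fin 7 → ℝ
abbrev M7 : Type := Matrix (Fin 7) (Fin 7) ℝ
abbrev M2 : Type := Matrix (Fin 2) (Fin 2) ℝ

/-- standard basis vectors of `V7` -/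
def stdB (i : Fin 7) : V7 := Pi.single i 1

/-- the symmetric bilinear form of signature (4,3):
`⟨x,y⟩ = x₁y₅ + x₅y₁ + x₂y₆ + x₆y₂ + x₃y₇ + x₇y₃ − x₄y₄` (1-indexed). -/
def bform (x y : V7) : ℝ :=
  x 0 * y 4 + x 4 * y 0 + x 1 * y 5 + x 5 * y 1 + x 2 * y 6 + x 6 * y 2 - x 3 * y 3

/-- `e^i ∧ e^j ∧ e^k` evaluated on a triple of vectors. -/
def wedge3 (i j k : Fin 7) (u v w : V7) : ℝ :=
  u i * (v j * w k - v k * w j) - u j * (v i * w k - v k * w i)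
    + u k * (v i * w j - v j * w i)

/-- the generic 3-form
`ω₀ = √2(e¹∧e⁶∧e⁷ + e²∧e³∧e⁵) − e⁴∧(e¹∧e⁵ − e²∧e⁶ − e³∧e⁷)` (1-indexed). -/
def omega0 (u v w : V7) : ℝ :=
  Real.sqrt 2 * (wedge3 0 5 6 u v w + wedge3 1 2 4 u v w)
    - (wedge3 3 0 4 u v w - wedge3 3 1 5 u v w - wedge3 3 2 6 u v w)

/-- membership in `g₂*` -/
def inG2 (X : M7) : Prop :=
  ∀ u v w : V7,
    omega0 (X.mulVec u) v w + omega0 u (X.mulVec v) w + omega0 u v (X.mulVec w) = 0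

def InvariantUnder (h : LieSubalgebra ℝ M7) (U : Submodule ℝ V7) : Prop :=
  ∀ X ∈ h, ∀ v ∈ U, X.mulVec v ∈ U

def IsIsotropic (U : Submodule ℝ V7) : Prop :=
  ∀ u ∈ U, ∀ u' ∈ U, bform u u' = 0

def IsNondeg (U : Submodule ℝ V7) : Prop :=
  ∀ u ∈ U, (∀ u' ∈ U, bform u u' = 0) → u = 0

def IsIndecomposable (h : LieSubalgebra ℝ M7) : Prop :=
  ∀ U : Submodule ℝ V7, InvariantUnder h U → U ≠ ⊥ → U ≠ ⊤ → ¬ IsNondeg U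

def IsIrreducibleSub (h : LieSubalgebra ℝ M7) (U : Submodule ℝ V7) : Prop :=
  InvariantUnder h U ∧ U ≠ ⊥ ∧
    ∀ W : Submodule ℝ V7, InvariantUnder h W → W ≤ U → W = ⊥ ∨ W = U

/-- the socle: sum of all irreducible invariant subspaces -/
def socleV (h : LieSubalgebra ℝ M7) : Submodule ℝ V7 :=
  sSup {U | IsIrreducibleSub h U}

def sqrt2 : ℝ := Real.sqrt 2

/-- the matrix `h(A,v,u,y)` of the Type I normal form -/
def hImat (A : M2) (v : ℝ) (u y : Fin 2 → ℝ) : M7 :=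
  !![A.trace, -u 1, u 0, sqrt2 * v, 0, -y 0, -y 1;
     0, A 0 0, A 0 1, sqrt2 * u 0, y 0, 0, v;
     0, A 1 0, A 1 1, sqrt2 * u 1, y 1, -v, 0;
     0, 0, 0, 0, sqrt2 * v, sqrt2 * u 0, sqrt2 * u 1;
     0, 0, 0, 0, -A.trace, 0, 0;
     0, 0, 0, 0, u 1, -A 0 0, -A 1 0;
     0, 0, 0, 0, -u 0, -A 0 1, -A 1 1]

def hIset : Set M7 := {X | ∃ A v u y, X = hImat A v u y}

def mSet : Set M7 := {X | ∃ v u y, X = hImat 0 v u y}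

def hsSet : Set M7 := {X | ∃ A v y, X = hImat A v 0 y}

/-- a basis realizing the Type I normal form -/
def TypeIBasis (b : Module.Basis (Fin 7) ℝ V7) : Prop :=
  (∀ i j, bform (b i) (b j) = bform (stdB i) (stdB j)) ∧
  (∀ i j k, omega0 (b i) (b j) (b k) = omega0 (stdB i) (stdB j) (stdB k))

/-- the matrix of (the endomorphism given by) `X` with respect to the basis `b` -/
def matrixWrt (b : Module.Basis (Fin 7) ℝ V7) (X : M7) : M7 :=
  LinearMap.toMatrix b b X.mulVecLin

def matSet (b : Module.Basis (Fin 7) ℝ V7) (h : LieSubalgebra ℝ M7) : Set M7 :=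
  matrixWrt b '' (h : Set M7)

/-- the space `K(S)` of algebraic curvature maps with values in `S` -/
def curvSet (S : Set M7) : Set (V7 →ₗ[ℝ] V7 →ₗ[ℝ] M7) :=
  {R | (∀ x, R x x = 0) ∧ (∀ x y, R x y ∈ S) ∧
    ∀ x y z, (R x y).mulVec z + (R y z).mulVec x + (R z x).mulVec y = 0}

/-- `h` is a Berger algebra -/
def IsBerger (h : LieSubalgebra ℝ M7) : Prop :=
  h.toSubmodule =
    Submodule.span ℝ {X | ∃ R ∈ curvSet (h : Set M7), ∃ x y : V7, X = R x y}

def Cmat (a : ℝ) : M2 := !![a, -1; 1, a]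
def Smat : M2 := !![1, 1; 0, 1]
def Nmat : M2 := !![0, 1; 0, 0]
def Dmat (μ : ℝ) : M2 := !![1, 0; 0, μ]
def diagSet : Set M2 := {A | ∃ a d : ℝ, A = !![a, 0; 0, d]}
def u1Set : Set M2 := {A | ∃ a b : ℝ, A = !![a, -b; b, a]}
def b2Set : Set M2 := {A | A 1 0 = 0}
def b2hatSet : Set M2 := {A | ∃ s t : ℝ, A = s • (1 : M2) + t • Nmat}
def sLamSet (lam : ℝ) : Set M2 :=
  {A | ∃ s t : ℝ, A = s • !![lam, 0; 0, lam - 1] + t • Nmat}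
def slSet : Set M2 := {A | A.trace = 0}
def spanLine (X : M2) : Set M2 := {A | ∃ t : ℝ, A = t • X}

/-- the projection `h(A,v,u,y) ↦ A` applied to a subset of `h^I` -/
def aprojI (S : Set M7) : Set M2 := {A | ∃ v u y, hImat A v u y ∈ S}

/-- `a ⋉ m` inside `h^I` -/
def semidirI (aS : Set M2) : Set M7 :=
  {X | ∃ A ∈ aS, ∃ v u y, X = hImat A v u y}

def bformII (x y : V7) : ℝ :=
  x 0 * y 5 + x 5 * y 0 + x 1 * y 6 + x 6 * y 1 + x 2 * y 4 + x 4 * y 2 - x 3 * y 3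

def omegaII (u v w : V7) : ℝ :=
  Real.sqrt 2 * (-(wedge3 0 4 6 u v w) + wedge3 1 2 5 u v w)
    - (wedge3 3 0 5 u v w - wedge3 3 1 6 u v w - wedge3 3 2 4 u v w)

/-- a basis realizing the Type II normal form -/
def TypeIIBasis (b : Module.Basis (Fin 7) ℝ V7) : Prop :=
  (∀ i j, bform (b i) (b j) = bformII (stdB i) (stdB j)) ∧
  (∀ i j k, omega0 (b i) (b j) (b k) = omegaII (stdB i) (stdB j) (stdB k))

def sigmaMat (z : Fin 4 → ℝ) : Matrix (Fin 2) (Fin 3) ℝ :=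
  !![z 1, sqrt2 * z 2, z 3; z 0, sqrt2 * z 1, z 2]

def rhoMat (A : M2) : Matrix (Fin 3) (Fin 3) ℝ :=
  !![A 0 0 - A 1 1, -(sqrt2 * A 0 1), 0;
     -(sqrt2 * A 1 0), 0, -(sqrt2 * A 0 1);
     0, -(sqrt2 * A 1 0), -(A 0 0) + A 1 1]

/-- the matrix `h(A,z,c)` of the Type II normal form -/
def hIImat (A : M2) (z : Fin 4 → ℝ) (c : ℝ) : M7 :=
  !![A 0 0, A 0 1, z 1, sqrt2 * z 2, z 3, 0, -c;
     A 1 0, A 1 1, z 0, sqrt2 * z 1, z 2, c, 0;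
     0, 0, A 0 0 - A 1 1, -(sqrt2 * A 0 1), 0, -z 3, -z 2;
     0, 0, -(sqrt2 * A 1 0), 0, -(sqrt2 * A 0 1), sqrt2 * z 2, sqrt2 * z 1;
     0, 0, 0, -(sqrt2 * A 1 0), -(A 0 0) + A 1 1, -z 1, -z 0;
     0, 0, 0, 0, 0, -(A 0 0), -(A 1 0);
     0, 0, 0, 0, 0, -(A 0 1), -(A 1 1)]

def hIIset : Set M7 := {X | ∃ A z c, X = hIImat A z c}

def nSet : Set M7 := {X | ∃ z c, X = hIImat 0 z c}

/-- the projection `h(A,z,c) ↦ A` applied to a subset of `h^II` -/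
def aprojII (S : Set M7) : Set M2 := {A | ∃ z c, hIImat A z c ∈ S}

/-- `a ⋉ n₁` inside `h^II`, for `n₁ = {h(0,z,c) : z ∈ Z, c ∈ ℝ}` -/
def semidirII (aS : Set M2) (Z : Set (Fin 4 → ℝ)) : Set M7 :=
  {X | ∃ A ∈ aS, ∃ z ∈ Z, ∃ c : ℝ, X = hIImat A z c}

/-- `ℝ·h(A₀,z₀,0) + {h(0,z,c) : z ∈ Z, c ∈ ℝ}` inside `h^II` -/
def affSemiII (A0 : M2) (z0 : Fin 4 → ℝ) (Z : Set (Fin 4 → ℝ)) : Set M7 :=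
  {X | ∃ t : ℝ, ∃ z ∈ Z, ∃ c : ℝ, X = hIImat (t • A0) (t • z0 + z) c}

/-- the space of `z ∈ ℝ⁴` supported on the index set `s` -/
def nZ (s : Set (Fin 4)) : Set (Fin 4 → ℝ) := {z | ∀ l, l ∉ s → z l = 0}

abbrev Poly2 := MvPolynomial (Fin 2) ℝ
def Px : Poly2 := MvPolynomial.X 0
def Py : Poly2 := MvPolynomial.X 1

/-- the `GL(2,ℝ)`-action `(A·p)(x,y) = p((x,y)A)` on polynomials -/
def polyAct (A : M2) (p : Poly2) : Poly2 :=
  MvPolynomial.aeval (fun i => A 0 i • Px + A 1 i • Py) p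

/-- projective equivalence of polynomials -/
def ProjEquiv (p q : Poly2) : Prop :=
  ∃ A : M2, IsUnit A ∧ ∃ c : ℝ, c ≠ 0 ∧ polyAct A p = c • q




section AuxG2

lemma mulVec_stdB (X : M7) (i j : Fin 7) : X.mulVec (stdB i) j = X j i := by
  simp [stdB, Matrix.mulVec_single]

lemma stdB_apply (i j : Fin 7) : stdB i j = if j = i then 1 else 0 := by
  simp [stdB, Pi.single_apply]

lemma sqrt2_sq : Real.sqrt 2 * Real.sqrt 2 = 2 := Real.mul_self_sqrt (by norm_num)

def crossFn (u v : V7) : V7 := fun j =>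
  match j with
  | ⟨0,_⟩ => Real.sqrt 2 * u 1 * v 2 - Real.sqrt 2 * u 2 * v 1 + u 0 * v 3 - u 3 * v 0
  | ⟨1,_⟩ => -Real.sqrt 2 * u 0 * v 6 + Real.sqrt 2 * u 6 * v 0 - u 1 * v 3 + u 3 * v 1
  | ⟨2,_⟩ => Real.sqrt 2 * u 0 * v 5 - Real.sqrt 2 * u 5 * v 0 - u 2 * v 3 + u 3 * v 2
  | ⟨3,_⟩ => u 0 * v 4 - u 1 * v 5 - u 2 * v 6 - u 4 * v 0 + u 5 * v 1 + u 6 * v 2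
  | ⟨4,_⟩ => Real.sqrt 2 * u 5 * v 6 - Real.sqrt 2 * u 6 * v 5 + u 3 * v 4 - u 4 * v 3
  | ⟨5,_⟩ => Real.sqrt 2 * u 2 * v 4 - Real.sqrt 2 * u 4 * v 2 - u 3 * v 5 + u 5 * v 3
  | ⟨6,_⟩ => -Real.sqrt 2 * u 1 * v 4 + Real.sqrt 2 * u 4 * v 1 - u 3 * v 6 + u 6 * v 3

@[simp] lemma crossFn_apply0 (u v : V7) : crossFn u v 0 = Real.sqrt 2 * u 1 * v 2 - Real.sqrt 2 * u 2 * v 1 + u 0 * v 3 - u 3 * v 0 := rfl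
@[simp] lemma crossFn_apply1 (u v : V7) : crossFn u v 1 = -Real.sqrt 2 * u 0 * v 6 + Real.sqrt 2 * u 6 * v 0 - u 1 * v 3 + u 3 * v 1 := rfl
@[simp] lemma crossFn_apply2 (u v : V7) : crossFn u v 2 = Real.sqrt 2 * u 0 * v 5 - Real.sqrt 2 * u 5 * v 0 - u 2 * v 3 + u 3 * v 2 := rfl
@[simp] lemma crossFn_apply3 (u v : V7) : crossFn u v 3 = u 0 * v 4 - u 1 * v 5 - u 2 * v 6 - u 4 * v 0 + u 5 * v 1 + u 6 * v 2 := rfl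
@[simp] lemma crossFn_apply4 (u v : V7) : crossFn u v 4 = Real.sqrt 2 * u 5 * v 6 - Real.sqrt 2 * u 6 * v 5 + u 3 * v 4 - u 4 * v 3 := rfl
@[simp] lemma crossFn_apply5 (u v : V7) : crossFn u v 5 = Real.sqrt 2 * u 2 * v 4 - Real.sqrt 2 * u 4 * v 2 - u 3 * v 5 + u 5 * v 3 := rfl
@[simp] lemma crossFn_apply6 (u v : V7) : crossFn u v 6 = -Real.sqrt 2 * u 1 * v 4 + Real.sqrt 2 * u 4 * v 1 - u 3 * v 6 + u 6 * v 3 := rfl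

lemma bform_comm (x y : V7) : bform x y = bform y x := by simp only [bform]; ring

lemma bform_zero_left (y : V7) : bform 0 y = 0 := by
  simp only [bform, Pi.zero_apply]; ring

lemma bform_add_left (x y z : V7) : bform (x + y) z = bform x z + bform y z := by
  simp only [bform, Pi.add_apply]; ring

lemma bform_smul_left (a : ℝ) (x z : V7) : bform (a • x) z = a * bform x z := by
  simp only [bform, Pi.smul_apply, smul_eq_mul]; ring

lemma bform_neg_left (x z : V7) : bform (-x) z = - bform x z := by
  simp only [bform, Pi.neg_apply]; ring

lemma eq_of_bform (x y : V7) (h : ∀ w, bform x w = bform y w) : x = y := by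
  have h0 := h (stdB 4); have h1 := h (stdB 5); have h2 := h (stdB 6)
  have h3 := h (stdB 3); have h4 := h (stdB 0); have h5 := h (stdB 1)
  have h6 := h (stdB 2)
  simp only [bform, stdB_apply, Fin.reduceEq, reduceIte, mul_zero, mul_one,
    zero_add, add_zero, sub_zero, zero_sub] at h0 h1 h2 h3 h4 h5 h6
  funext j
  fin_cases j
  · exact h0
  · exact h1
  · exact h2
  · exact neg_injective h3
  · exact h4
  · exact h5
  · exact h6

lemma bform_crossFn (u v w : V7) : bform (crossFn u v) w = omega0 u v w := by
  simp only [bform, omega0, wedge3, crossFn_apply0, crossFn_apply1, crossFn_apply2,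
    crossFn_apply3, crossFn_apply4, crossFn_apply5, crossFn_apply6]
  ring

lemma omega0_alt1 (u w : V7) : omega0 u u w = 0 := by
  simp only [omega0, wedge3]; ring

lemma omega0_alt13 (u v : V7) : omega0 u v u = 0 := by
  simp only [omega0, wedge3]; ring

lemma omega0_alt23 (u v : V7) : omega0 u v v = 0 := by
  simp only [omega0, wedge3]; ring

lemma omega0_swap12 (u v w : V7) : omega0 v u w = - omega0 u v w := by
  simp only [omega0, wedge3]; ring

lemma omega0_swap23 (u v w : V7) : omega0 u w v = - omega0 u v w := by
  simp only [omega0, wedge3]; ring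

lemma omega0_lin1 (a c : ℝ) (x y z w : V7) :
    omega0 (a • x + c • y) z w = a * omega0 x z w + c * omega0 y z w := by
  simp only [omega0, wedge3, Pi.add_apply, Pi.smul_apply, smul_eq_mul]; ring

lemma omega0_lin2 (a c : ℝ) (x y z w : V7) :
    omega0 z (a • x + c • y) w = a * omega0 z x w + c * omega0 z y w := by
  simp only [omega0, wedge3, Pi.add_apply, Pi.smul_apply, smul_eq_mul]; ring

lemma crossFn_self (u : V7) : crossFn u u = 0 := by
  apply eq_of_bform; intro w
  rw [bform_crossFn, omega0_alt1, bform_zero_left]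

lemma crossFn_antisym (u v : V7) : crossFn u v = - crossFn v u := by
  apply eq_of_bform; intro w
  rw [bform_crossFn, bform_neg_left, bform_crossFn, omega0_swap12]

lemma crossFn_lin_left (a c : ℝ) (x y z : V7) :
    crossFn (a • x + c • y) z = a • crossFn x z + c • crossFn y z := by
  apply eq_of_bform; intro w
  rw [bform_crossFn, omega0_lin1, bform_add_left, bform_smul_left, bform_smul_left,
    bform_crossFn, bform_crossFn]

lemma crossFn_lin_right (a c : ℝ) (x y z : V7) :
    crossFn z (a • x + c • y) = a • crossFn z x + c • crossFn z y := by
  apply eq_of_bform; intro w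
  rw [bform_crossFn, omega0_lin2, bform_add_left, bform_smul_left, bform_smul_left,
    bform_crossFn, bform_crossFn]

set_option maxHeartbeats 1000000 in
lemma crossFn_triple (u v : V7) :
    crossFn u (crossFn u v) = bform u v • u - bform u u • v := by
  apply eq_of_bform; intro w
  simp only [bform, omega0, wedge3, crossFn_apply0, crossFn_apply1, crossFn_apply2,
    crossFn_apply3, crossFn_apply4, crossFn_apply5, crossFn_apply6,
    Pi.sub_apply, Pi.smul_apply, smul_eq_mul]
  linear_combination (u 0 * u 1 * v 4 * w 5 + u 0 * u 1 * v 5 * w 4 + u 0 * u 2 * v 4 * w 6 + u 0 * u 2 * v 6 * w 4 - u 0 * u 4 * v 1 * w 5 - u 0 * u 4 * v 2 * w 6 - u 0 * u 4 * v 5 * w 1 - u 0 * u 4 * v 6 * w 2 - u 1 * u 5 * v 0 * w 4 - u 1 * u 5 * v 2 * w 6 - u 1 * u 5 * v 4 * w 0 - u 1 * u 5 * v 6 * w 2 + u 1 * u 6 * v 2 * w 5 + u 1 * u 6 * v 5 * w 2 + u 2 * u 5 * v 1 * w 6 + u 2 * u 5 * v 6 * w 1 - u 2 * u 6 * v 0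 * w 4 - u 2 * u 6 * v 1 * w 5 - u 2 * u 6 * v 4 * w 0 - u 2 * u 6 * v 5 * w 1 + u 4 * u 5 * v 0 * w 1 + u 4 * u 5 * v 1 * w 0 + u 4 * u 6 * v 0 * w 2 + u 4 * u 6 * v 2 * w 0) * sqrt2_sq

set_option maxHeartbeats 4000000 in
lemma skewG2 (X : M7) (hX : inG2 X) (u v : V7) :
    bform (X.mulVec u) v + bform u (X.mulVec v) = 0 := by
  have hs := sqrt2_sq
  have e012 : Real.sqrt 2 * X 4 0 = 0 := by
    have h := hX (stdB 0) (stdB 1) (stdB 2)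
    simp only [omega0, wedge3, mulVec_stdB, stdB_apply, Fin.reduceEq, reduceIte] at h
    linear_combination h
  have e013 : -X 4 1 - X 5 0 = 0 := by
    have h := hX (stdB 0) (stdB 1) (stdB 3)
    simp only [omega0, wedge3, mulVec_stdB, stdB_apply, Fin.reduceEq, reduceIte] at h
    linear_combination h
  have e014 : -Real.sqrt 2 * X 2 0 + X 3 1 = 0 := by
    have h := hX (stdB 0) (stdB 1) (stdB 4)
    simp only [omega0, wedge3, mulVec_stdB, stdB_apply, Fin.reduceEq, reduceIte] at h
    linear_combination h
  have e015 : -Real.sqrt 2 * X 6 1 + X 3 0 = 0 := by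
    have h := hX (stdB 0) (stdB 1) (stdB 5)
    simp only [omega0, wedge3, mulVec_stdB, stdB_apply, Fin.reduceEq, reduceIte] at h
    linear_combination h
  have e016 : Real.sqrt 2 * X 5 1 = 0 := by
    have h := hX (stdB 0) (stdB 1) (stdB 6)
    simp only [omega0, wedge3, mulVec_stdB, stdB_apply, Fin.reduceEq, reduceIte] at h
    linear_combination h
  have e023 : -X 4 2 - X 6 0 = 0 := by
    have h := hX (stdB 0) (stdB 2) (stdB 3)
    simp only [omega0, wedge3, mulVec_stdB, stdB_apply, Fin.reduceEq, reduceIte] at h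
    linear_combination h
  have e024 : Real.sqrt 2 * X 1 0 + X 3 2 = 0 := by
    have h := hX (stdB 0) (stdB 2) (stdB 4)
    simp only [omega0, wedge3, mulVec_stdB, stdB_apply, Fin.reduceEq, reduceIte] at h
    linear_combination h
  have e025 : -Real.sqrt 2 * X 6 2 = 0 := by
    have h := hX (stdB 0) (stdB 2) (stdB 5)
    simp only [omega0, wedge3, mulVec_stdB, stdB_apply, Fin.reduceEq, reduceIte] at h
    linear_combination h
  have e026 : Real.sqrt 2 * X 5 2 + X 3 0 = 0 := by
    have h := hX (stdB 0) (stdB 2) (stdB 6)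
    simp only [omega0, wedge3, mulVec_stdB, stdB_apply, Fin.reduceEq, reduceIte] at h
    linear_combination h
  have e034 : X 0 0 + X 3 3 + X 4 4 = 0 := by
    have h := hX (stdB 0) (stdB 3) (stdB 4)
    simp only [omega0, wedge3, mulVec_stdB, stdB_apply, Fin.reduceEq, reduceIte] at h
    linear_combination h
  have e035 : -Real.sqrt 2 * X 6 3 - X 1 0 + X 4 5 = 0 := by
    have h := hX (stdB 0) (stdB 3) (stdB 5)
    simp only [omega0, wedge3, mulVec_stdB, stdB_apply, Fin.reduceEq, reduceIte] at h
    linear_combination h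
  have e036 : Real.sqrt 2 * X 5 3 - X 2 0 + X 4 6 = 0 := by
    have h := hX (stdB 0) (stdB 3) (stdB 6)
    simp only [omega0, wedge3, mulVec_stdB, stdB_apply, Fin.reduceEq, reduceIte] at h
    linear_combination h
  have e045 : -Real.sqrt 2 * X 6 4 - X 3 5 = 0 := by
    have h := hX (stdB 0) (stdB 4) (stdB 5)
    simp only [omega0, wedge3, mulVec_stdB, stdB_apply, Fin.reduceEq, reduceIte] at h
    linear_combination h
  have e046 : Real.sqrt 2 * X 5 4 - X 3 6 = 0 := by
    have h := hX (stdB 0) (stdB 4) (stdB 6)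
    simp only [omega0, wedge3, mulVec_stdB, stdB_apply, Fin.reduceEq, reduceIte] at h
    linear_combination h
  have e056 : Real.sqrt 2 * X 0 0 + Real.sqrt 2 * X 5 5 + Real.sqrt 2 * X 6 6 = 0 := by
    have h := hX (stdB 0) (stdB 5) (stdB 6)
    simp only [omega0, wedge3, mulVec_stdB, stdB_apply, Fin.reduceEq, reduceIte] at h
    linear_combination h
  have e123 : Real.sqrt 2 * X 4 3 + X 5 2 - X 6 1 = 0 := by
    have h := hX (stdB 1) (stdB 2) (stdB 3)
    simp only [omega0, wedge3, mulVec_stdB, stdB_apply, Fin.reduceEq, reduceIte] at h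
    linear_combination h
  have e124 : Real.sqrt 2 * X 1 1 + Real.sqrt 2 * X 2 2 + Real.sqrt 2 * X 4 4 = 0 := by
    have h := hX (stdB 1) (stdB 2) (stdB 4)
    simp only [omega0, wedge3, mulVec_stdB, stdB_apply, Fin.reduceEq, reduceIte] at h
    linear_combination h
  have e125 : Real.sqrt 2 * X 4 5 - X 3 2 = 0 := by
    have h := hX (stdB 1) (stdB 2) (stdB 5)
    simp only [omega0, wedge3, mulVec_stdB, stdB_apply, Fin.reduceEq, reduceIte] at h
    linear_combination h
  have e126 : Real.sqrt 2 * X 4 6 + X 3 1 = 0 := by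
    have h := hX (stdB 1) (stdB 2) (stdB 6)
    simp only [omega0, wedge3, mulVec_stdB, stdB_apply, Fin.reduceEq, reduceIte] at h
    linear_combination h
  have e134 : Real.sqrt 2 * X 2 3 + X 0 1 - X 5 4 = 0 := by
    have h := hX (stdB 1) (stdB 3) (stdB 4)
    simp only [omega0, wedge3, mulVec_stdB, stdB_apply, Fin.reduceEq, reduceIte] at h
    linear_combination h
  have e135 : -X 1 1 - X 3 3 - X 5 5 = 0 := by
    have h := hX (stdB 1) (stdB 3) (stdB 5)
    simp only [omega0, wedge3, mulVec_stdB, stdB_apply, Fin.reduceEq, reduceIte] at h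
    linear_combination h
  have e136 : -X 2 1 - X 5 6 = 0 := by
    have h := hX (stdB 1) (stdB 3) (stdB 6)
    simp only [omega0, wedge3, mulVec_stdB, stdB_apply, Fin.reduceEq, reduceIte] at h
    linear_combination h
  have e145 : -Real.sqrt 2 * X 2 5 - X 3 4 = 0 := by
    have h := hX (stdB 1) (stdB 4) (stdB 5)
    simp only [omega0, wedge3, mulVec_stdB, stdB_apply, Fin.reduceEq, reduceIte] at h
    linear_combination h
  have e146 : -Real.sqrt 2 * X 2 6 = 0 := by
    have h := hX (stdB 1) (stdB 4) (stdB 6)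
    simp only [omega0, wedge3, mulVec_stdB, stdB_apply, Fin.reduceEq, reduceIte] at h
    linear_combination h
  have e156 : Real.sqrt 2 * X 0 1 + X 3 6 = 0 := by
    have h := hX (stdB 1) (stdB 5) (stdB 6)
    simp only [omega0, wedge3, mulVec_stdB, stdB_apply, Fin.reduceEq, reduceIte] at h
    linear_combination h
  have e234 : -Real.sqrt 2 * X 1 3 + X 0 2 - X 6 4 = 0 := by
    have h := hX (stdB 2) (stdB 3) (stdB 4)
    simp only [omega0, wedge3, mulVec_stdB, stdB_apply, Fin.reduceEq, reduceIte] at h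
    linear_combination h
  have e235 : -X 1 2 - X 6 5 = 0 := by
    have h := hX (stdB 2) (stdB 3) (stdB 5)
    simp only [omega0, wedge3, mulVec_stdB, stdB_apply, Fin.reduceEq, reduceIte] at h
    linear_combination h
  have e236 : -X 2 2 - X 3 3 - X 6 6 = 0 := by
    have h := hX (stdB 2) (stdB 3) (stdB 6)
    simp only [omega0, wedge3, mulVec_stdB, stdB_apply, Fin.reduceEq, reduceIte] at h
    linear_combination h
  have e245 : Real.sqrt 2 * X 1 5 = 0 := by
    have h := hX (stdB 2) (stdB 4) (stdB 5)
    simp only [omega0, wedge3, mulVec_stdB, stdB_apply, Fin.reduceEq, reduceIte] at h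
    linear_combination h
  have e246 : Real.sqrt 2 * X 1 6 - X 3 4 = 0 := by
    have h := hX (stdB 2) (stdB 4) (stdB 6)
    simp only [omega0, wedge3, mulVec_stdB, stdB_apply, Fin.reduceEq, reduceIte] at h
    linear_combination h
  have e256 : Real.sqrt 2 * X 0 2 - X 3 5 = 0 := by
    have h := hX (stdB 2) (stdB 5) (stdB 6)
    simp only [omega0, wedge3, mulVec_stdB, stdB_apply, Fin.reduceEq, reduceIte] at h
    linear_combination h
  have e345 : X 0 5 + X 1 4 = 0 := by
    have h := hX (stdB 3) (stdB 4) (stdB 5)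
    simp only [omega0, wedge3, mulVec_stdB, stdB_apply, Fin.reduceEq, reduceIte] at h
    linear_combination h
  have e346 : X 0 6 + X 2 4 = 0 := by
    have h := hX (stdB 3) (stdB 4) (stdB 6)
    simp only [omega0, wedge3, mulVec_stdB, stdB_apply, Fin.reduceEq, reduceIte] at h
    linear_combination h
  have e356 : Real.sqrt 2 * X 0 3 - X 1 6 + X 2 5 = 0 := by
    have h := hX (stdB 3) (stdB 5) (stdB 6)
    simp only [omega0, wedge3, mulVec_stdB, stdB_apply, Fin.reduceEq, reduceIte] at h
    linear_combination h
  have e456 : Real.sqrt 2 * X 0 4 = 0 := by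
    have h := hX (stdB 4) (stdB 5) (stdB 6)
    simp only [omega0, wedge3, mulVec_stdB, stdB_apply, Fin.reduceEq, reduceIte] at h
    linear_combination h
  simp only [bform, Matrix.mulVec, dotProduct, Fin.sum_univ_seven]
  linear_combination (Real.sqrt 2 * u 0 * v 0) * e012
    + (-u 0 * v 1 - u 1 * v 0) * e013
    + (-((1:ℝ)/2) * Real.sqrt 2 * u 0 * v 6 - ((1:ℝ)/2) * Real.sqrt 2 * u 6 * v 0 - ((1:ℝ)/2) * u 1 * v 3 - ((1:ℝ)/2) * u 3 * v 1) * e014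
    + (-((1:ℝ)/2) * Real.sqrt 2 * u 1 * v 2 - ((1:ℝ)/2) * Real.sqrt 2 * u 2 * v 1 - ((1:ℝ)/2) * u 0 * v 3 - ((1:ℝ)/2) * u 3 * v 0) * e015
    + (Real.sqrt 2 * u 1 * v 1) * e016
    + (-u 0 * v 2 - u 2 * v 0) * e023
    + (((1:ℝ)/2) * Real.sqrt 2 * u 0 * v 5 + ((1:ℝ)/2) * Real.sqrt 2 * u 5 * v 0 - ((1:ℝ)/2) * u 2 * v 3 - ((1:ℝ)/2) * u 3 * v 2) * e024
    + (-Real.sqrt 2 * u 2 * v 2) * e025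
    + (((1:ℝ)/2) * Real.sqrt 2 * u 1 * v 2 + ((1:ℝ)/2) * Real.sqrt 2 * u 2 * v 1 - ((1:ℝ)/2) * u 0 * v 3 - ((1:ℝ)/2) * u 3 * v 0) * e026
    + (((2:ℝ)/3) * u 0 * v 4 - ((1:ℝ)/3) * u 1 * v 5 - ((1:ℝ)/3) * u 2 * v 6 - ((2:ℝ)/3) * u 3 * v 3 + ((2:ℝ)/3) * u 4 * v 0 - ((1:ℝ)/3) * u 5 * v 1 - ((1:ℝ)/3) * u 6 * v 2) * e034
    + (-((1:ℝ)/2) * Real.sqrt 2 * u 2 * v 3 - ((1:ℝ)/2) * Real.sqrt 2 * u 3 * v 2) * e035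
    + (((1:ℝ)/2) * Real.sqrt 2 * u 1 * v 3 + ((1:ℝ)/2) * Real.sqrt 2 * u 3 * v 1) * e036
    + (-((1:ℝ)/2) * Real.sqrt 2 * u 2 * v 4 - ((1:ℝ)/2) * Real.sqrt 2 * u 4 * v 2 + ((1:ℝ)/2) * u 3 * v 5 + ((1:ℝ)/2) * u 5 * v 3) * e045
    + (((1:ℝ)/2) * Real.sqrt 2 * u 1 * v 4 + ((1:ℝ)/2) * Real.sqrt 2 * u 4 * v 1 + ((1:ℝ)/2) * u 3 * v 6 + ((1:ℝ)/2) * u 6 * v 3) * e046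
    + (((1:ℝ)/6) * Real.sqrt 2 * u 0 * v 4 + ((1:ℝ)/6) * Real.sqrt 2 * u 1 * v 5 + ((1:ℝ)/6) * Real.sqrt 2 * u 2 * v 6 + ((1:ℝ)/3) * Real.sqrt 2 * u 3 * v 3 + ((1:ℝ)/6) * Real.sqrt 2 * u 4 * v 0 + ((1:ℝ)/6) * Real.sqrt 2 * u 5 * v 1 + ((1:ℝ)/6) * Real.sqrt 2 * u 6 * v 2) * e056
    + (((1:ℝ)/2) * Real.sqrt 2 * u 0 * v 3 + ((1:ℝ)/2) * Real.sqrt 2 * u 3 * v 0) * e123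
    + (((1:ℝ)/6) * Real.sqrt 2 * u 0 * v 4 + ((1:ℝ)/6) * Real.sqrt 2 * u 1 * v 5 + ((1:ℝ)/6) * Real.sqrt 2 * u 2 * v 6 + ((1:ℝ)/3) * Real.sqrt 2 * u 3 * v 3 + ((1:ℝ)/6) * Real.sqrt 2 * u 4 * v 0 + ((1:ℝ)/6) * Real.sqrt 2 * u 5 * v 1 + ((1:ℝ)/6) * Real.sqrt 2 * u 6 * v 2) * e124
    + (((1:ℝ)/2) * Real.sqrt 2 * u 0 * v 5 + ((1:ℝ)/2) * Real.sqrt 2 * u 5 * v 0 + ((1:ℝ)/2) * u 2 * v 3 + ((1:ℝ)/2) * u 3 * v 2) * e125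
    + (((1:ℝ)/2) * Real.sqrt 2 * u 0 * v 6 + ((1:ℝ)/2) * Real.sqrt 2 * u 6 * v 0 - ((1:ℝ)/2) * u 1 * v 3 - ((1:ℝ)/2) * u 3 * v 1) * e126
    + (((1:ℝ)/2) * Real.sqrt 2 * u 3 * v 6 + ((1:ℝ)/2) * Real.sqrt 2 * u 6 * v 3) * e134
    + (((1:ℝ)/3) * u 0 * v 4 - ((2:ℝ)/3) * u 1 * v 5 + ((1:ℝ)/3) * u 2 * v 6 + ((2:ℝ)/3) * u 3 * v 3 + ((1:ℝ)/3) * u 4 * v 0 - ((2:ℝ)/3) * u 5 * v 1 + ((1:ℝ)/3) * u 6 * v 2) * e135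
    + (-u 1 * v 6 - u 6 * v 1) * e136
    + (-((1:ℝ)/2) * Real.sqrt 2 * u 5 * v 6 - ((1:ℝ)/2) * Real.sqrt 2 * u 6 * v 5 + ((1:ℝ)/2) * u 3 * v 4 + ((1:ℝ)/2) * u 4 * v 3) * e145
    + (-Real.sqrt 2 * u 6 * v 6) * e146
    + (((1:ℝ)/2) * Real.sqrt 2 * u 1 * v 4 + ((1:ℝ)/2) * Real.sqrt 2 * u 4 * v 1 - ((1:ℝ)/2) * u 3 * v 6 - ((1:ℝ)/2) * u 6 * v 3) * e156
    + (-((1:ℝ)/2) * Real.sqrt 2 * u 3 * v 5 - ((1:ℝ)/2) * Real.sqrt 2 * u 5 * v 3) * e234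
    + (-u 2 * v 5 - u 5 * v 2) * e235
    + (((1:ℝ)/3) * u 0 * v 4 + ((1:ℝ)/3) * u 1 * v 5 - ((2:ℝ)/3) * u 2 * v 6 + ((2:ℝ)/3) * u 3 * v 3 + ((1:ℝ)/3) * u 4 * v 0 + ((1:ℝ)/3) * u 5 * v 1 - ((2:ℝ)/3) * u 6 * v 2) * e236
    + (Real.sqrt 2 * u 5 * v 5) * e245
    + (((1:ℝ)/2) * Real.sqrt 2 * u 5 * v 6 + ((1:ℝ)/2) * Real.sqrt 2 * u 6 * v 5 + ((1:ℝ)/2) * u 3 * v 4 + ((1:ℝ)/2) * u 4 * v 3) * e246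
    + (((1:ℝ)/2) * Real.sqrt 2 * u 2 * v 4 + ((1:ℝ)/2) * Real.sqrt 2 * u 4 * v 2 + ((1:ℝ)/2) * u 3 * v 5 + ((1:ℝ)/2) * u 5 * v 3) * e256
    + (u 4 * v 5 + u 5 * v 4) * e345
    + (u 4 * v 6 + u 6 * v 4) * e346
    + (((1:ℝ)/2) * Real.sqrt 2 * u 3 * v 4 + ((1:ℝ)/2) * Real.sqrt 2 * u 4 * v 3) * e356
    + (Real.sqrt 2 * u 4 * v 4) * e456
    + (-u 0 * v 0 * X 4 0 - ((1:ℝ)/2) * u 0 * v 3 * X 4 3 - ((1:ℝ)/6) * u 0 * v 4 * X 0 0 - ((1:ℝ)/6) * u 0 * v 4 * X 1 1 - ((1:ℝ)/6) * u 0 * v 4 * X 2 2 - ((1:ℝ)/6) * u 0 * v 4 * X 4 4 - ((1:ℝ)/6) * u 0 * v 4 * X 5 5 - ((1:ℝ)/6) * u 0 * v 4 * X 6 6 - ((1:ℝ)/2) * u 0 * v 5 * X 1 0 - ((1:ℝ)/2) * u 0 * v 5 * X 4 5 - ((1:ℝ)/2) * u 0 * v 6 * X 2 0 - ((1:ℝ)/2)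 * u 0 * v 6 * X 4 6 - u 1 * v 1 * X 5 1 - ((1:ℝ)/2) * u 1 * v 2 * X 5 2 - ((1:ℝ)/2) * u 1 * v 2 * X 6 1 - ((1:ℝ)/2) * u 1 * v 3 * X 5 3 - ((1:ℝ)/2) * u 1 * v 4 * X 0 1 - ((1:ℝ)/2) * u 1 * v 4 * X 5 4 - ((1:ℝ)/6) * u 1 * v 5 * X 0 0 - ((1:ℝ)/6) * u 1 * v 5 * X 1 1 - ((1:ℝ)/6) * u 1 * v 5 * X 2 2 - ((1:ℝ)/6) * u 1 * v 5 * X 4 4 - ((1:ℝ)/6) * u 1 * v 5 * X 5 5 - ((1:ℝ)/6) * u 1 * v 5 * X 6 6 - ((1:ℝ)/2) * u 2 * v 1 * X 5 2 - ((1:ℝ)/2) * u 2 * v 1 * X 6 1 - u 2 * v 2 * X 6 2 - ((1:ℝ)/2) * u 2 * v 3 * X 6 3 - ((1:ℝ)/2) * u 2 * v 4 * X 0 2 - ((1:ℝ)/2) * u 2 * v 4 * X 6 4 - ((1:ℝ)/6) * u 2 * v 6 * X 0 0 - ((1:ℝ)/6) * u 2 * v 6 * X 1 1 - ((1:ℝ)/6)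 * u 2 * v 6 * X 2 2 - ((1:ℝ)/6) * u 2 * v 6 * X 4 4 - ((1:ℝ)/6) * u 2 * v 6 * X 5 5 - ((1:ℝ)/6) * u 2 * v 6 * X 6 6 - ((1:ℝ)/2) * u 3 * v 0 * X 4 3 - ((1:ℝ)/2) * u 3 * v 1 * X 5 3 - ((1:ℝ)/2) * u 3 * v 2 * X 6 3 - ((1:ℝ)/3) * u 3 * v 3 * X 0 0 - ((1:ℝ)/3) * u 3 * v 3 * X 1 1 - ((1:ℝ)/3) * u 3 * v 3 * X 2 2 - ((1:ℝ)/3) * u 3 * v 3 * X 4 4 - ((1:ℝ)/3) * u 3 * v 3 * X 5 5 - ((1:ℝ)/3) * u 3 * v 3 * X 6 6 - ((1:ℝ)/2) * u 3 * v 4 * X 0 3 - ((1:ℝ)/2) * u 3 * v 5 * X 1 3 - ((1:ℝ)/2) * u 3 * v 6 * X 2 3 - ((1:ℝ)/6) * u 4 * v 0 * X 0 0 - ((1:ℝ)/6) * u 4 * v 0 * X 1 1 - ((1:ℝ)/6) * u 4 * v 0 * X 2 2 - ((1:ℝ)/6) * u 4 * v 0 * X 4 4 - ((1:ℝ)/6)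 * u 4 * v 0 * X 5 5 - ((1:ℝ)/6) * u 4 * v 0 * X 6 6 - ((1:ℝ)/2) * u 4 * v 1 * X 0 1 - ((1:ℝ)/2) * u 4 * v 1 * X 5 4 - ((1:ℝ)/2) * u 4 * v 2 * X 0 2 - ((1:ℝ)/2) * u 4 * v 2 * X 6 4 - ((1:ℝ)/2) * u 4 * v 3 * X 0 3 - u 4 * v 4 * X 0 4 - ((1:ℝ)/2) * u 5 * v 0 * X 1 0 - ((1:ℝ)/2) * u 5 * v 0 * X 4 5 - ((1:ℝ)/6) * u 5 * v 1 * X 0 0 - ((1:ℝ)/6) * u 5 * v 1 * X 1 1 - ((1:ℝ)/6) * u 5 * v 1 * X 2 2 - ((1:ℝ)/6) * u 5 * v 1 * X 4 4 - ((1:ℝ)/6) * u 5 * v 1 * X 5 5 - ((1:ℝ)/6) * u 5 * v 1 * X 6 6 - ((1:ℝ)/2) * u 5 * v 3 * X 1 3 - u 5 * v 5 * X 1 5 - ((1:ℝ)/2) * u 5 * v 6 * X 1 6 - ((1:ℝ)/2) * u 5 * v 6 * X 2 5 - ((1:ℝ)/2) * u 6 * v 0 * X 2 0 - ((1:ℝ)/2)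 * u 6 * v 0 * X 4 6 - ((1:ℝ)/6) * u 6 * v 2 * X 0 0 - ((1:ℝ)/6) * u 6 * v 2 * X 1 1 - ((1:ℝ)/6) * u 6 * v 2 * X 2 2 - ((1:ℝ)/6) * u 6 * v 2 * X 4 4 - ((1:ℝ)/6) * u 6 * v 2 * X 5 5 - ((1:ℝ)/6) * u 6 * v 2 * X 6 6 - ((1:ℝ)/2) * u 6 * v 3 * X 2 3 - ((1:ℝ)/2) * u 6 * v 5 * X 1 6 - ((1:ℝ)/2) * u 6 * v 5 * X 2 5 - u 6 * v 6 * X 2 6) * hs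

lemma crossFn_deriv (X : M7) (hX : inG2 X) (u v : V7) :
    X.mulVec (crossFn u v) = crossFn (X.mulVec u) v + crossFn u (X.mulVec v) := by
  apply eq_of_bform; intro w
  have h1 := skewG2 X hX (crossFn u v) w
  have h2 := hX u v w
  rw [bform_crossFn] at h1
  rw [bform_add_left, bform_crossFn, bform_crossFn]
  linarith

end AuxG2

/-- Lemma 2.2 (3): For an indecomposable subalgebra `h ⊆ g₂*` and a
2-dimensional `h`-invariant isotropic subspace `E` with `b₁ × b₂ ≠ 0` for a basis
`b₁,b₂` of `E`, there is a 1-dimensional `h`-invariant subspace `E₀ ⊄ E` such that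
`E ⊕ E₀` is isotropic. -/
theorem stmt5 (h : LieSubalgebra ℝ M7) (hg2 : ∀ X ∈ h, inG2 X)
    (hind : IsIndecomposable h)
    (cross : V7 → V7 → V7)
    (hcross : ∀ u v w : V7, bform (cross u v) w = omega0 u v w)
    (E : Submodule ℝ V7) (hinv : InvariantUnder h E) (hiso : IsIsotropic E)
    (hdim : Module.finrank ℝ E = 2)
    (b₁ b₂ : V7) (hb : Submodule.span ℝ {b₁, b₂} = E)
    (hcr : cross b₁ b₂ ≠ 0) :
    ∃ E₀ : Submodule ℝ V7,
      Module.finrank ℝ E₀ = 1 ∧ InvariantUnder h E₀ ∧ ¬ E₀ ≤ E ∧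
      IsIsotropic (E ⊔ E₀) := by
  have hb1E : b₁ ∈ E := by
    rw [← hb]; exact Submodule.subset_span (by simp)
  have hb2E : b₂ ∈ E := by
    rw [← hb]; exact Submodule.subset_span (by simp)
  have hcross_eq : cross b₁ b₂ = crossFn b₁ b₂ := by
    apply eq_of_bform; intro w
    rw [hcross, bform_crossFn]
  have hn0 : crossFn b₁ b₂ ≠ 0 := by rw [← hcross_eq]; exact hcr
  have hb11 : bform b₁ b₁ = 0 := hiso b₁ hb1E b₁ hb1E
  have hb12 : bform b₁ b₂ = 0 := hiso b₁ hb1E b₂ hb2E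
  have hb21 : bform b₂ b₁ = 0 := hiso b₂ hb2E b₁ hb1E
  have hb22 : bform b₂ b₂ = 0 := hiso b₂ hb2E b₂ hb2E
  have hn1 : crossFn b₁ (crossFn b₁ b₂) = 0 := by
    rw [crossFn_triple, hb12, hb11]; simp
  have hn2 : crossFn b₂ (crossFn b₁ b₂) = 0 := by
    rw [crossFn_antisym b₁ b₂]
    have hneg : crossFn b₂ (-(crossFn b₂ b₁)) = - crossFn b₂ (crossFn b₂ b₁) := by
      have := crossFn_lin_right (-1 : ℝ) 0 (crossFn b₂ b₁) (crossFn b₂ b₁) b₂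
      simpa [neg_smul, one_smul] using this
    rw [hneg, crossFn_triple, hb21, hb22]
    simp
  have hb1n : bform b₁ (crossFn b₁ b₂) = 0 := by
    rw [bform_comm, bform_crossFn, omega0_alt13]
  have hb2n : bform b₂ (crossFn b₁ b₂) = 0 := by
    rw [bform_comm, bform_crossFn, omega0_alt23]
  have hnn : bform (crossFn b₁ b₂) (crossFn b₁ b₂) = 0 := by
    rw [bform_crossFn]
    have h1 : omega0 b₁ (crossFn b₁ b₂) b₂ = 0 := by
      rw [← bform_crossFn, hn1, bform_zero_left]
    have h2 := omega0_swap23 b₁ b₂ (crossFn b₁ b₂)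
    rw [h1] at h2
    linarith
  refine ⟨Submodule.span ℝ {crossFn b₁ b₂}, finrank_span_singleton hn0, ?_, ?_, ?_⟩
  · -- invariance
    intro X hX x hx
    rw [Submodule.mem_span_singleton] at hx ⊢
    obtain ⟨c, rfl⟩ := hx
    have hXb1 : X.mulVec b₁ ∈ E := hinv X hX b₁ hb1E
    have hXb2 : X.mulVec b₂ ∈ E := hinv X hX b₂ hb2E
    rw [← hb, Submodule.mem_span_pair] at hXb1 hXb2
    obtain ⟨a1, c1, h1⟩ := hXb1
    obtain ⟨a2, c2, h2⟩ := hXb2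
    have hXn : X.mulVec (crossFn b₁ b₂) = (a1 + c2) • crossFn b₁ b₂ := by
      rw [crossFn_deriv X (hg2 X hX) b₁ b₂, ← h1, ← h2, crossFn_lin_left,
        crossFn_lin_right, crossFn_self b₁, crossFn_self b₂]
      module
    refine ⟨c * (a1 + c2), ?_⟩
    rw [Matrix.mulVec_smul, hXn, smul_smul]
  · -- not contained in E
    intro hle
    have hnE : crossFn b₁ b₂ ∈ E := hle (Submodule.mem_span_singleton_self _)
    rw [← hb, Submodule.mem_span_pair] at hnE
    obtain ⟨p, q, hpq⟩ := hnE
    have e1 : crossFn b₁ (crossFn b₁ b₂) = q • crossFn b₁ b₂ := by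
      conv_lhs => rw [← hpq]
      rw [crossFn_lin_right, crossFn_self b₁, smul_zero, zero_add]
    have e2 : crossFn b₂ (crossFn b₁ b₂) = -(p • crossFn b₁ b₂) := by
      conv_lhs => rw [← hpq]
      rw [crossFn_lin_right, crossFn_self b₂, smul_zero, add_zero,
        crossFn_antisym b₂ b₁, smul_neg]
    rw [hn1] at e1
    rw [hn2] at e2
    have hq : q = 0 := by
      rcases smul_eq_zero.mp e1.symm with hh | hh
      · exact hh
      · exact absurd hh hn0
    have hp : p = 0 := by
      have hz : p • crossFn b₁ b₂ = 0 := by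
        have := e2.symm
        rwa [neg_eq_zero] at this
      rcases smul_eq_zero.mp hz with hh | hh
      · exact hh
      · exact absurd hh hn0
    apply hn0
    rw [← hpq, hp, hq, zero_smul, zero_smul, zero_add]
  · -- isotropic
    intro x hx x' hx'
    rw [Submodule.mem_sup] at hx hx'
    obtain ⟨e, he, f, hf, rfl⟩ := hx
    obtain ⟨e', he', f', hf', rfl⟩ := hx'
    rw [Submodule.mem_span_singleton] at hf hf'
    obtain ⟨c, rfl⟩ := hf
    obtain ⟨c', rfl⟩ := hf'
    have hee' : bform e e' = 0 := hiso e he e' he'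
    have hen : bform e (crossFn b₁ b₂) = 0 := by
      have heE := he
      rw [← hb, Submodule.mem_span_pair] at heE
      obtain ⟨a, b, hab⟩ := heE
      rw [← hab, bform_add_left, bform_smul_left, bform_smul_left, hb1n, hb2n]
      ring
    have hne' : bform (crossFn b₁ b₂) e' = 0 := by
      have heE := he'
      rw [← hb, Submodule.mem_span_pair] at heE
      obtain ⟨a, b, hab⟩ := heE
      rw [bform_comm, ← hab, bform_add_left, bform_smul_left, bform_smul_left, hb1n, hb2n]
      ring
    have expand : bform (e + c • crossFn b₁ b₂) (e' + c' • crossFn b₁ b₂)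
        = bform e e' + c' * bform e (crossFn b₁ b₂)
          + c * bform (crossFn b₁ b₂) e'
          + c * c' * bform (crossFn b₁ b₂) (crossFn b₁ b₂) := by
      simp only [bform, Pi.add_apply, Pi.smul_apply, smul_eq_mul]; ring
    rw [expand, hee', hen, hne', hnn]
    ring
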